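/- Let Φ ∈ ℝ^{m×n}, let T ⊆ {1,…,n} with #T = s, and let k ≥ 1. Assume Φ satisfies the RIP of order s+2k with radius δ_{s+2k} ∈ (0,1) and the RIP of order 2k with radius δ_{2k} ∈ (0,1), and that δ_{2k}² + 2δ_{s+2k} < 1. Let x ∈ ℝⁿ be such that #((supp x) \ T) ≤ k, let y = Φx, and let x* solve iBPDN with ε = 0. Then x* = x. -/

import Mathlib

open scoped BigOperators

/-- The Euclidean (ℓ₂) norm of a vector. -/
noncomputable def l2 {d : ℕ} (u : Fin d → ℝ) : ℝ := Real.sqrt (∑ i, (u i) ^ 2)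

/-- The ℓ₁ norm of a vector. -/
noncomputable def l1 {d : ℕ} (u : Fin d → ℝ) : ℝ := ∑ i, |u i|

/-- `restr S u` equals `u` on `S` and `0` outside `S`. -/
def restr {n : ℕ} (S : Finset (Fin n)) (u : Fin n → ℝ) : Fin n → ℝ :=
  fun i => if i ∈ S then u i else 0

/-- Restricted Isometry Property of order `q` with radius `δ`. -/
def RIP {m n : ℕ} (Φ : Matrix (Fin m) (Fin n) ℝ) (q : ℕ) (δ : ℝ) : Prop :=
  ∀ u : Fin n → ℝ, (Function.support u).ncard ≤ q →
    (1 - δ) * (l2 u) ^ 2 ≤ (l2 (Φ.mulVec u)) ^ 2 ∧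
    (l2 (Φ.mulVec u)) ^ 2 ≤ (1 + δ) * (l2 u) ^ 2

/-- `xs` solves the innovative Basis Pursuit DeNoise program. -/
def solvesIBPDN {m n : ℕ} (Φ : Matrix (Fin m) (Fin n) ℝ) (y : Fin m → ℝ) (ε : ℝ)
    (T : Finset (Fin n)) (xs : Fin n → ℝ) : Prop :=
  l2 (y - Φ.mulVec xs) ≤ ε ∧
  ∀ u : Fin n → ℝ, l2 (y - Φ.mulVec u) ≤ ε → l1 (restr Tᶜ xs) ≤ l1 (restr Tᶜ u)

/-- `S` is a set of largest-magnitude entries of `r`. -/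
def isLargest {n : ℕ} (r : Fin n → ℝ) (S : Finset (Fin n)) : Prop :=
  ∀ i ∈ S, ∀ j ∉ S, |r j| ≤ |r i|

noncomputable def ip {d : ℕ} (u v : Fin d → ℝ) : ℝ := ∑ i, u i * v i

lemma l2_nonneg {d : ℕ} (u : Fin d → ℝ) : 0 ≤ l2 u := Real.sqrt_nonneg _

lemma sq_l2 {d : ℕ} (u : Fin d → ℝ) : l2 u ^ 2 = ∑ i, (u i) ^ 2 :=
  Real.sq_sqrt (Finset.sum_nonneg fun i _ => sq_nonneg _)

lemma ip_self {d : ℕ} (u : Fin d → ℝ) : ip u u = l2 u ^ 2 := by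
  rw [sq_l2]; unfold ip; congr 1; ext i; ring

lemma ip_comm {d : ℕ} (u v : Fin d → ℝ) : ip u v = ip v u := by
  unfold ip; congr 1; ext i; ring

lemma ip_add_left {d : ℕ} (u v w : Fin d → ℝ) : ip (u + v) w = ip u w + ip v w := by
  unfold ip; rw [← Finset.sum_add_distrib]; congr 1; ext i; simp [add_mul]

lemma ip_sum_left {d : ℕ} {ι : Type*} (s : Finset ι) (f : ι → Fin d → ℝ) (w : Fin d → ℝ) :
    ip (∑ j ∈ s, f j) w = ∑ j ∈ s, ip (f j) w := by
  unfold ip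
  rw [Finset.sum_comm]
  congr 1; ext i; simp [Finset.sum_mul]

lemma l1_restr {n : ℕ} (S : Finset (Fin n)) (u : Fin n → ℝ) :
    l1 (restr S u) = ∑ i ∈ S, |u i| := by
  unfold l1 restr
  rw [← Finset.sum_subset (Finset.subset_univ S)]
  · exact Finset.sum_congr rfl fun i hi => by simp [hi]
  · intro i _ hi; simp [hi]

lemma sq_l2_restr {n : ℕ} (S : Finset (Fin n)) (u : Fin n → ℝ) :
    l2 (restr S u) ^ 2 = ∑ i ∈ S, (u i) ^ 2 := by
  rw [sq_l2]; unfold restr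
  rw [← Finset.sum_subset (Finset.subset_univ S)]
  · exact Finset.sum_congr rfl fun i hi => by simp [hi]
  · intro i _ hi; simp [hi]

lemma support_restr {n : ℕ} (S : Finset (Fin n)) (u : Fin n → ℝ) :
    Function.support (restr S u) ⊆ ↑S := by
  intro i hi
  by_contra h
  simp only [Finset.mem_coe] at h
  exact hi (by simp [restr, h])

lemma ncard_support_restr {n : ℕ} (S : Finset (Fin n)) (u : Fin n → ℝ) :
    (Function.support (restr S u)).ncard ≤ S.card := by
  have := Set.ncard_le_ncard (support_restr S u) (Set.toFinite _)
  simpa using this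

lemma restr_union {n : ℕ} {A B : Finset (Fin n)} (hd : Disjoint A B) (u : Fin n → ℝ) :
    restr (A ∪ B) u = restr A u + restr B u := by
  funext i
  simp only [restr, Pi.add_apply, Finset.mem_union]
  by_cases hA : i ∈ A
  · have : i ∉ B := fun hB => (Finset.disjoint_left.mp hd hA) hB
    simp [hA, this]
  · by_cases hB : i ∈ B <;> simp [hA, hB]

lemma l2_restr_mono {n : ℕ} {A B : Finset (Fin n)} (h : A ⊆ B) (u : Fin n → ℝ) :
    l2 (restr A u) ≤ l2 (restr B u) := by
  apply Real.sqrt_le_sqrt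
  apply Finset.sum_le_sum
  intro i _
  unfold restr
  by_cases hA : i ∈ A
  · simp [hA, h hA]
  · simp [hA]; positivity

lemma restr_eq_zero_of_l2 {n : ℕ} {S : Finset (Fin n)} {u : Fin n → ℝ}
    (h : l2 (restr S u) = 0) : ∀ i ∈ S, u i = 0 := by
  intro i hi
  have h2 : ∑ j ∈ S, (u j) ^ 2 = 0 := by
    rw [← sq_l2_restr, h]; ring
  have := (Finset.sum_eq_zero_iff_of_nonneg (fun j _ => sq_nonneg (u j))).mp h2 i hi
  exact pow_eq_zero_iff (by norm_num) |>.mp this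

lemma sq_l2_add_of_disjoint {d : ℕ} {u v : Fin d → ℝ}
    (h : ∀ i, u i = 0 ∨ v i = 0) : l2 (u + v) ^ 2 = l2 u ^ 2 + l2 v ^ 2 := by
  rw [sq_l2, sq_l2, sq_l2, ← Finset.sum_add_distrib]
  apply Finset.sum_congr rfl
  intro i _
  rcases h i with h0 | h0 <;> simp [h0] <;> ring

lemma sq_l2_sub_of_disjoint {d : ℕ} {u v : Fin d → ℝ}
    (h : ∀ i, u i = 0 ∨ v i = 0) : l2 (u - v) ^ 2 = l2 u ^ 2 + l2 v ^ 2 := by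
  rw [sq_l2, sq_l2, sq_l2, ← Finset.sum_add_distrib]
  apply Finset.sum_congr rfl
  intro i _
  rcases h i with h0 | h0 <;> simp [h0] <;> ring

lemma l2_eq_zero {d : ℕ} {u : Fin d → ℝ} (h : l2 u = 0) : u = 0 := by
  funext i
  have h2 : ∑ j, (u j) ^ 2 = 0 := by rw [← sq_l2, h]; ring
  have := (Finset.sum_eq_zero_iff_of_nonneg (fun j _ => sq_nonneg (u j))).mp h2 i (Finset.mem_univ i)
  simpa using pow_eq_zero_iff (two_ne_zero) |>.mp this

lemma l2_smul {d : ℕ} (t : ℝ) (u : Fin d → ℝ) : l2 (t • u) = |t| * l2 u := by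
  unfold l2
  rw [show ∑ i, (t • u) i ^ 2 = t ^ 2 * ∑ i, u i ^ 2 by rw [Finset.mul_sum]; exact Finset.sum_congr rfl fun i _ => by simp [mul_pow]]
  rw [Real.sqrt_mul (sq_nonneg t), Real.sqrt_sq_eq_abs]

lemma ip_parallelogram {d : ℕ} (a b : Fin d → ℝ) :
    l2 (a + b) ^ 2 - l2 (a - b) ^ 2 = 4 * ip a b := by
  rw [sq_l2, sq_l2]
  unfold ip
  rw [← Finset.sum_sub_distrib, Finset.mul_sum]
  apply Finset.sum_congr rfl
  intro i _
  simp only [Pi.add_apply, Pi.sub_apply]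
  ring

/-- restricted orthogonality, unnormalized form -/
lemma rip_ip_le_aux {m n q : ℕ} {Φ : Matrix (Fin m) (Fin n) ℝ} {δ : ℝ} (hrip : RIP Φ q δ)
    (u v : Fin n → ℝ) (hdisj : ∀ i, u i = 0 ∨ v i = 0)
    (hcard : (Function.support u ∪ Function.support v).ncard ≤ q) :
    |ip (Φ.mulVec u) (Φ.mulVec v)| ≤ δ / 2 * (l2 u ^ 2 + l2 v ^ 2) := by
  have hsupp_add : (Function.support (u + v)).ncard ≤ q :=
    le_trans (Set.ncard_le_ncard (Function.support_add u v) (Set.toFinite _)) hcard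
  have hsupp_sub : (Function.support (u - v)).ncard ≤ q := by
    refine le_trans (Set.ncard_le_ncard ?_ (Set.toFinite _)) hcard
    intro i hi
    simp only [Function.mem_support, Pi.sub_apply] at hi
    by_contra hc
    simp only [Set.mem_union, Function.mem_support, not_or, not_not] at hc
    simp [hc.1, hc.2] at hi
  have h1 := hrip (u + v) hsupp_add
  have h2 := hrip (u - v) hsupp_sub
  have e1 : l2 (u + v) ^ 2 = l2 u ^ 2 + l2 v ^ 2 := sq_l2_add_of_disjoint hdisj
  have e2 : l2 (u - v) ^ 2 = l2 u ^ 2 + l2 v ^ 2 := sq_l2_sub_of_disjoint hdisj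
  have key : l2 (Φ.mulVec (u + v)) ^ 2 - l2 (Φ.mulVec (u - v)) ^ 2
      = 4 * ip (Φ.mulVec u) (Φ.mulVec v) := by
    rw [Matrix.mulVec_add, Matrix.mulVec_sub]
    exact ip_parallelogram _ _
  rw [abs_le]
  rw [e1] at h1
  rw [e2] at h2
  constructor <;> nlinarith [h1.1, h1.2, h2.1, h2.2, key]

/-- restricted orthogonality -/
lemma rip_ip_le {m n q : ℕ} {Φ : Matrix (Fin m) (Fin n) ℝ} {δ : ℝ} (hδ : 0 ≤ δ)
    (hrip : RIP Φ q δ)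
    (u v : Fin n → ℝ) (hdisj : ∀ i, u i = 0 ∨ v i = 0)
    (hcard : (Function.support u ∪ Function.support v).ncard ≤ q) :
    |ip (Φ.mulVec u) (Φ.mulVec v)| ≤ δ * l2 u * l2 v := by
  rcases eq_or_lt_of_le (l2_nonneg u) with hu | hu
  · have : u = 0 := l2_eq_zero hu.symm
    subst this
    simp [Matrix.mulVec_zero, ip, ← hu]
  rcases eq_or_lt_of_le (l2_nonneg v) with hv | hv
  · have : v = 0 := l2_eq_zero hv.symm
    subst this
    simp [Matrix.mulVec_zero, ip, ← hv]
  set t : ℝ := Real.sqrt (l2 v / l2 u) with ht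
  have htpos : 0 < t := Real.sqrt_pos.mpr (div_pos hv hu)
  have hts : t ^ 2 = l2 v / l2 u := Real.sq_sqrt (le_of_lt (div_pos hv hu))
  have hsupp_tu : Function.support (t • u) = Function.support u := by
    ext i; simp [Function.mem_support, smul_eq_mul, mul_eq_zero, ne_of_gt htpos]
  have hsupp_tv : Function.support (t⁻¹ • v) = Function.support v := by
    ext i; simp [Function.mem_support, smul_eq_mul, mul_eq_zero, inv_eq_zero, ne_of_gt htpos]
  have hd : ∀ i, (t • u) i = 0 ∨ (t⁻¹ • v) i = 0 := by
    intro i; rcases hdisj i with h0 | h0 <;> simp [h0]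
  have hc : (Function.support (t • u) ∪ Function.support (t⁻¹ • v)).ncard ≤ q := by
    rw [hsupp_tu, hsupp_tv]; exact hcard
  have := rip_ip_le_aux hrip (t • u) (t⁻¹ • v) hd hc
  have hips : ip (Φ.mulVec (t • u)) (Φ.mulVec (t⁻¹ • v)) = ip (Φ.mulVec u) (Φ.mulVec v) := by
    rw [Matrix.mulVec_smul, Matrix.mulVec_smul]
    unfold ip
    apply Finset.sum_congr rfl
    intro i _
    simp only [Pi.smul_apply, smul_eq_mul]
    field_simp
  rw [hips] at this
  rw [l2_smul, l2_smul] at this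
  have habs : |t| = t := abs_of_pos htpos
  have habsi : |t⁻¹| = t⁻¹ := abs_of_pos (by positivity)
  rw [habs, habsi] at this
  calc |ip (Φ.mulVec u) (Φ.mulVec v)| ≤ δ / 2 * ((t * l2 u) ^ 2 + (t⁻¹ * l2 v) ^ 2) := this
    _ = δ * l2 u * l2 v := by
        have h1 : (t * l2 u) ^ 2 = l2 u * l2 v := by
          rw [mul_pow, hts]; field_simp
        have h2 : (t⁻¹ * l2 v) ^ 2 = l2 u * l2 v := by
          rw [mul_pow, inv_pow, hts]
          field_simp
        rw [h1, h2]; ring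

/-- ℓ₁-ℓ₂ comparison on a finset. -/
lemma l1_le_sqrt_card_mul_l2 {n : ℕ} (S : Finset (Fin n)) (u : Fin n → ℝ) :
    l1 (restr S u) ≤ Real.sqrt S.card * l2 (restr S u) := by
  rw [l1_restr]
  have hcs := Finset.sum_mul_sq_le_sq_mul_sq S (fun _ => (1:ℝ)) (fun i => |u i|)
  simp only [one_pow, one_mul, sq_abs] at hcs
  have h1 : (∑ i ∈ S, |u i|) ^ 2 ≤ S.card * (∑ i ∈ S, u i ^ 2) := by
    simpa using hcs
  have hnn : (0:ℝ) ≤ ∑ i ∈ S, |u i| := Finset.sum_nonneg fun i _ => abs_nonneg _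
  have h2 := Real.sqrt_le_sqrt h1
  rw [Real.sqrt_sq hnn, Real.sqrt_mul (Nat.cast_nonneg _)] at h2
  have h3 : Real.sqrt (∑ i ∈ S, u i ^ 2) = l2 (restr S u) := by
    rw [show (l2 (restr S u)) = Real.sqrt (l2 (restr S u) ^ 2) from (Real.sqrt_sq (l2_nonneg _)).symm, sq_l2_restr]
  rw [h3] at h2
  exact h2

/-- existence of a top-k subset -/
lemma exists_topk {n : ℕ} (h : Fin n → ℝ) (k : ℕ) (R : Finset (Fin n)) :
    ∃ S : Finset (Fin n), S ⊆ R ∧ S.card = min k R.card ∧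
      ∀ i ∈ S, ∀ j ∈ R \ S, |h j| ≤ |h i| := by
  induction k generalizing R with
  | zero => exact ⟨∅, by simp⟩
  | succ k ih =>
    rcases R.eq_empty_or_nonempty with rfl | hR
    · exact ⟨∅, by simp⟩
    · obtain ⟨a, ha, hmax⟩ := R.exists_max_image (fun i => |h i|) hR
      obtain ⟨S, hSsub, hScard, hSmax⟩ := ih (R.erase a)
      have haS : a ∉ S := fun hc => (Finset.mem_erase.mp (hSsub hc)).1 rfl
      refine ⟨insert a S, ?_, ?_, ?_⟩
      · intro i hi
        rcases Finset.mem_insert.mp hi with rfl | hi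
        · exact ha
        · exact Finset.mem_of_mem_erase (hSsub hi)
      · rw [Finset.card_insert_of_notMem haS, hScard, Finset.card_erase_of_mem ha]
        have : 1 ≤ R.card := Finset.card_pos.mpr hR
        omega
      · intro i hi j hj
        have hjR : j ∈ R := (Finset.mem_sdiff.mp hj).1
        have hjni : j ∉ insert a S := (Finset.mem_sdiff.mp hj).2
        rcases Finset.mem_insert.mp hi with rfl | hi
        · exact hmax j hjR
        · refine hSmax i hi j (Finset.mem_sdiff.mpr ⟨?_, ?_⟩)
          · exact Finset.mem_erase.mpr ⟨fun hc => hjni (hc ▸ Finset.mem_insert_self a S), hjR⟩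
          · exact fun hc => hjni (Finset.mem_insert_of_mem hc)

noncomputable def remB {n : ℕ} (h : Fin n → ℝ) (k : ℕ) (C : Finset (Fin n)) : ℕ → Finset (Fin n)
  | 0 => C
  | (j+1) => remB h k C j \ (exists_topk h k (remB h k C j)).choose

noncomputable def blk {n : ℕ} (h : Fin n → ℝ) (k : ℕ) (C : Finset (Fin n)) (j : ℕ) :
    Finset (Fin n) :=
  (exists_topk h k (remB h k C j)).choose

variable {n : ℕ} {h : Fin n → ℝ} {k : ℕ} {C : Finset (Fin n)}

lemma blk_subset (j : ℕ) : blk h k C j ⊆ remB h k C j :=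
  (exists_topk h k (remB h k C j)).choose_spec.1

lemma blk_card (j : ℕ) : (blk h k C j).card = min k (remB h k C j).card :=
  (exists_topk h k (remB h k C j)).choose_spec.2.1

lemma blk_max (j : ℕ) : ∀ i ∈ blk h k C j, ∀ a ∈ remB h k C j \ blk h k C j, |h a| ≤ |h i| :=
  (exists_topk h k (remB h k C j)).choose_spec.2.2

lemma remB_succ (j : ℕ) : remB h k C (j+1) = remB h k C j \ blk h k C j := rfl

lemma remB_subset (j : ℕ) : remB h k C j ⊆ C := by
  induction j with
  | zero => exact Finset.Subset.refl _
  | succ j ih => exact (Finset.sdiff_subset).trans ih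

lemma remB_card_le (hk : 1 ≤ k) (j : ℕ) : (remB h k C j).card ≤ C.card - j := by
  induction j with
  | zero => simpa [remB] using Finset.le_refl C.card
  | succ j ih =>
    rcases (remB h k C j).eq_empty_or_nonempty with he | hne
    · rw [remB_succ, he]; simp
    · have h1 : 1 ≤ (remB h k C j).card := Finset.card_pos.mpr hne
      have h2 : 1 ≤ (blk h k C j).card := by rw [blk_card]; omega
      have h3 : (remB h k C (j+1)).card = (remB h k C j).card - (blk h k C j).card := by
        rw [remB_succ, Finset.card_sdiff_of_subset (blk_subset j)]
      omega

lemma remB_empty (hk : 1 ≤ k) : remB h k C C.card = ∅ := by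
  have := remB_card_le (h := h) (C := C) hk C.card
  simpa using Finset.card_eq_zero.mp (by omega)

lemma remB_anti {i j : ℕ} (hij : i ≤ j) : remB h k C j ⊆ remB h k C i := by
  induction j with
  | zero => simp_all
  | succ j ih =>
    rcases Nat.lt_or_ge i (j+1) with hlt | hge
    · exact (remB_succ j ▸ Finset.sdiff_subset).trans (ih (by omega))
    · have : i = j + 1 := by omega
      subst this; exact Finset.Subset.refl _

lemma blk_disj {i j : ℕ} (hij : i < j) : Disjoint (blk h k C i) (blk h k C j) := by
  have h1 : blk h k C j ⊆ remB h k C (i+1) := (blk_subset j).trans (remB_anti hij)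
  rw [remB_succ] at h1
  exact Finset.disjoint_left.mpr fun a hai haj => (Finset.mem_sdiff.mp (h1 haj)).2 hai

lemma remB_union (j : ℕ) :
    C = remB h k C j ∪ (Finset.range j).biUnion (blk h k C) := by
  induction j with
  | zero => simp [remB]
  | succ j ih =>
    rw [Finset.range_add_one, Finset.biUnion_insert]
    rw [remB_succ]
    nth_rewrite 1 [ih]
    ext a
    simp only [Finset.mem_union, Finset.mem_sdiff]
    constructor
    · rintro (ha | ha)
      · by_cases hb : a ∈ blk h k C j
        · tauto
        · tauto
      · tauto
    · rintro (⟨ha, _⟩ | ha | ha)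
      · tauto
      · exact Or.inl (blk_subset j ha)
      · tauto

lemma blk_l2_le (hk : 1 ≤ k) (j : ℕ) :
    l2 (restr (blk h k C (j+1)) h) ≤ l1 (restr (blk h k C j) h) / Real.sqrt k := by
  have hknn : (0:ℝ) < Real.sqrt k := Real.sqrt_pos.mpr (by exact_mod_cast hk)
  have hl1nn : 0 ≤ l1 (restr (blk h k C j) h) := by
    rw [l1_restr]; exact Finset.sum_nonneg fun i _ => abs_nonneg _
  rcases (blk h k C (j+1)).eq_empty_or_nonempty with he | hne
  · rw [he]
    have : restr (∅ : Finset (Fin n)) h = 0 := by funext i; simp [restr]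
    rw [this]
    have : l2 (0 : Fin n → ℝ) = 0 := by unfold l2; simp
    rw [this]
    positivity
  · -- blk j has exactly k elements
    have hAk : (blk h k C j).card = k := by
      have hBne : (remB h k C (j+1)).Nonempty := hne.mono (blk_subset (j+1))
      rw [remB_succ] at hBne
      obtain ⟨b, hb⟩ := hBne
      rw [Finset.mem_sdiff] at hb
      have hlt : (blk h k C j).card < (remB h k C j).card :=
        Finset.card_lt_card (Finset.ssubset_iff_of_subset (blk_subset j) |>.mpr ⟨b, hb.1, hb.2⟩)
      have := blk_card (h := h) (k := k) (C := C) j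
      omega
    set L := l1 (restr (blk h k C j) h) with hL
    have hptwise : ∀ i ∈ blk h k C (j+1), |h i| ≤ L / k := by
      intro i hi
      have hiR : i ∈ remB h k C j \ blk h k C j := by
        rw [← remB_succ]; exact blk_subset (j+1) hi
      have hle : ∀ a ∈ blk h k C j, |h i| ≤ |h a| := fun a ha => blk_max j a ha i hiR
      have hsum : (k : ℝ) * |h i| ≤ L := by
        rw [hL, l1_restr]
        calc (k : ℝ) * |h i| = ((blk h k C j).card : ℝ) * |h i| := by rw [hAk]
          _ = ∑ _a ∈ blk h k C j, |h i| := by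
              rw [Finset.sum_const, nsmul_eq_mul]
          _ ≤ ∑ a ∈ blk h k C j, |h a| := Finset.sum_le_sum fun a ha => hle a ha
      rw [div_eq_inv_mul, ← mul_le_mul_iff_right₀ (show (0:ℝ) < k by exact_mod_cast hk)]
      rw [← mul_assoc, mul_inv_cancel₀ (show (k:ℝ) ≠ 0 by positivity), one_mul]
      exact hsum
    have hsq : l2 (restr (blk h k C (j+1)) h) ^ 2 ≤ L ^ 2 / k := by
      rw [sq_l2_restr]
      calc ∑ i ∈ blk h k C (j+1), h i ^ 2
          ≤ ∑ _i ∈ blk h k C (j+1), (L / k) ^ 2 := by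
            apply Finset.sum_le_sum
            intro i hi
            have := hptwise i hi
            calc h i ^ 2 = |h i| ^ 2 := (sq_abs _).symm
              _ ≤ (L / k) ^ 2 := by
                  apply pow_le_pow_left₀ (abs_nonneg _) this
        _ = (blk h k C (j+1)).card * (L / k) ^ 2 := by rw [Finset.sum_const, nsmul_eq_mul]
        _ ≤ k * (L / k) ^ 2 := by
            apply mul_le_mul_of_nonneg_right _ (sq_nonneg _)
            have : (blk h k C (j+1)).card ≤ k := by rw [blk_card]; omega
            exact_mod_cast this
        _ = L ^ 2 / k := by
            field_simp
    have h2 : l2 (restr (blk h k C (j+1)) h) ≤ Real.sqrt (L ^ 2 / k) := by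
      rw [show l2 (restr (blk h k C (j+1)) h) = Real.sqrt (l2 (restr (blk h k C (j+1)) h) ^ 2) from (Real.sqrt_sq (l2_nonneg _)).symm]
      exact Real.sqrt_le_sqrt hsq
    calc l2 (restr (blk h k C (j+1)) h) ≤ Real.sqrt (L ^ 2 / k) := h2
      _ = L / Real.sqrt k := by
          rw [Real.sqrt_div (sq_nonneg L), Real.sqrt_sq hl1nn]
      _ = l1 (restr (blk h k C j) h) / Real.sqrt k := by rw [hL]

lemma blk_card_le (j : ℕ) : (blk h k C j).card ≤ k := by
  have := blk_card (h := h) (k := k) (C := C) j; omega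

lemma mulVec_sum' {m n : ℕ} (Φ : Matrix (Fin m) (Fin n) ℝ) {ι : Type*} (s : Finset ι)
    (f : ι → Fin n → ℝ) : Φ.mulVec (∑ j ∈ s, f j) = ∑ j ∈ s, Φ.mulVec (f j) := by
  classical
  induction s using Finset.induction_on with
  | empty => simp [Matrix.mulVec_zero]
  | insert a s hnotmem ih =>
    rw [Finset.sum_insert hnotmem, Finset.sum_insert hnotmem, Matrix.mulVec_add, ih]

lemma restr_biUnion_eq_sum {n : ℕ} (N : ℕ) (blks : ℕ → Finset (Fin n))
    (hd : ∀ i j, i < j → Disjoint (blks i) (blks j)) (u : Fin n → ℝ) :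
    restr ((Finset.range N).biUnion blks) u = ∑ j ∈ Finset.range N, restr (blks j) u := by
  induction N with
  | zero => funext i; simp [restr]
  | succ N ih =>
    rw [Finset.range_add_one, Finset.biUnion_insert, Finset.sum_insert Finset.notMem_range_self]
    have hdisj : Disjoint (blks N) ((Finset.range N).biUnion blks) := by
      rw [Finset.disjoint_biUnion_right]
      intro i hi
      exact (hd i N (Finset.mem_range.mp hi)).symm
    rw [restr_union hdisj, ih]

lemma l1_restr_biUnion {n : ℕ} (N : ℕ) (blks : ℕ → Finset (Fin n))
    (hd : ∀ i j, i < j → Disjoint (blks i) (blks j)) (u : Fin n → ℝ) :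
    l1 (restr ((Finset.range N).biUnion blks) u) = ∑ j ∈ Finset.range N, l1 (restr (blks j) u) := by
  rw [l1_restr]
  rw [Finset.sum_biUnion]
  · exact Finset.sum_congr rfl fun j _ => (l1_restr _ _).symm
  · intro i _ j _ hij
    rcases Nat.lt_or_ge i j with hlt | hge
    · exact hd i j hlt
    · exact (hd j i (by omega)).symm

lemma ncard_union_supports {n : ℕ} (S1 S2 : Finset (Fin n)) (u v : Fin n → ℝ) :
    (Function.support (restr S1 u) ∪ Function.support (restr S2 v)).ncard ≤ (S1 ∪ S2).card := by
  have hsub : Function.support (restr S1 u) ∪ Function.support (restr S2 v) ⊆ ↑(S1 ∪ S2) := by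
    rw [Finset.coe_union]
    exact Set.union_subset_union (support_restr S1 u) (support_restr S2 v)
  have h1 := Set.ncard_le_ncard hsub (Set.toFinite _)
  rwa [Set.ncard_coe_finset] at h1

lemma restr_pt_disj {n : ℕ} {S1 S2 : Finset (Fin n)} (hd : Disjoint S1 S2)
    (u v : Fin n → ℝ) : ∀ i, restr S1 u i = 0 ∨ restr S2 v i = 0 := by
  intro i
  by_cases h1 : i ∈ S1
  · right
    have : i ∉ S2 := Finset.disjoint_left.mp hd h1
    simp [restr, this]
  · left
    simp [restr, h1]

set_option maxHeartbeats 1000000 in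
/-- **Exact recovery of sparse signals with partially known support by iBPDN
(noiseless case).** -/
theorem ibpdn_exact_recovery
    {m n : ℕ} (Φ : Matrix (Fin m) (Fin n) ℝ)
    (T : Finset (Fin n)) (s k : ℕ) (hs : T.card = s) (hk : 1 ≤ k)
    (δsk δk : ℝ) (hδsk : δsk ∈ Set.Ioo (0 : ℝ) 1) (hδk : δk ∈ Set.Ioo (0 : ℝ) 1)
    (hRIPsk : RIP Φ (s + 2 * k) δsk) (hRIPk : RIP Φ (2 * k) δk)
    (hcond : δk ^ 2 + 2 * δsk < 1)
    (x : Fin n → ℝ) (hx : (Function.support x \ (T : Set (Fin n))).ncard ≤ k)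
    (y : Fin m → ℝ) (hy : y = Φ.mulVec x)
    (xstar : Fin n → ℝ) (hsol : solvesIBPDN Φ y 0 T xstar) :
    xstar = x := by
  unfold solvesIBPDN at hsol
  obtain ⟨hδsk0, hδsk1⟩ := hδsk
  obtain ⟨hδk0, hδk1⟩ := hδk
  set hv : Fin n → ℝ := xstar - x with hhv
  -- Φ hv = 0
  have hxs : Φ.mulVec xstar = y := by
    have h0 : l2 (y - Φ.mulVec xstar) = 0 := le_antisymm hsol.1 (l2_nonneg _)
    have h1 := l2_eq_zero h0
    funext i
    have := congrFun h1 i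
    simp only [Pi.sub_apply, Pi.zero_apply, sub_eq_zero] at this
    exact this.symm
  have hΦh : Φ.mulVec hv = 0 := by
    rw [hhv, Matrix.mulVec_sub, hxs, hy, sub_self]
  -- the residual support Δ
  set Δ : Finset (Fin n) := Finset.univ.filter (fun i => x i ≠ 0 ∧ i ∉ T) with hΔdef
  have hΔk : Δ.card ≤ k := by
    have hco : (↑Δ : Set (Fin n)) = Function.support x \ ↑T := by
      ext i
      simp [hΔdef, Function.mem_support]
    calc Δ.card = (↑Δ : Set (Fin n)).ncard := (Set.ncard_coe_finset Δ).symm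
      _ = (Function.support x \ ↑T).ncard := by rw [hco]
      _ ≤ k := hx
  have hΔT : Disjoint T Δ := by
    rw [Finset.disjoint_right]
    intro a ha
    exact ((Finset.mem_filter.mp ha).2).2
  -- feasibility of x
  have hfeas : l2 (y - Φ.mulVec x) ≤ 0 := by
    rw [hy, sub_self]
    unfold l2
    simp
  have hl1le := hsol.2 x hfeas
  set A : Finset (Fin n) := T ∪ Δ with hA
  set C : Finset (Fin n) := Aᶜ with hC
  have hΔTc : Δ ⊆ Tᶜ := by
    intro i hi
    simp only [Finset.mem_compl]
    exact ((Finset.mem_filter.mp hi).2).2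
  have hCTc : C ⊆ Tᶜ := by
    intro i hi
    simp only [hC, hA, Finset.mem_compl, Finset.mem_union, not_or] at hi
    exact Finset.mem_compl.mpr hi.1
  have hxC : ∀ i ∈ C, x i = 0 := by
    intro i hi
    simp only [hC, hA, Finset.mem_compl, Finset.mem_union, not_or] at hi
    by_contra hxi
    exact hi.2 (Finset.mem_filter.mpr ⟨Finset.mem_univ i, hxi, Finset.mem_compl.mp (hCTc (by simp [hC, hA, Finset.mem_compl, Finset.mem_union, not_or]; exact hi))⟩)
  -- cone constraint: l1 (restr C hv) ≤ l1 (restr Δ hv)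
  have hTc_split : Tᶜ \ Δ = C := by
    ext i
    simp only [hC, hA, Finset.mem_sdiff, Finset.mem_compl, Finset.mem_union, not_or]
  have hcone : l1 (restr C hv) ≤ l1 (restr Δ hv) := by
    rw [l1_restr, l1_restr] at hl1le
    have e1 : ∑ i ∈ Tᶜ, |xstar i| = ∑ i ∈ C, |xstar i| + ∑ i ∈ Δ, |xstar i| := by
      rw [← hTc_split]; exact (Finset.sum_sdiff hΔTc).symm
    have e2 : ∑ i ∈ Tᶜ, |x i| = ∑ i ∈ C, |x i| + ∑ i ∈ Δ, |x i| := by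
      rw [← hTc_split]; exact (Finset.sum_sdiff hΔTc).symm
    rw [e1, e2] at hl1le
    have e3 : ∑ i ∈ C, |xstar i| = ∑ i ∈ C, |hv i| := by
      apply Finset.sum_congr rfl
      intro i hi
      rw [hhv]
      simp [hxC i hi]
    have e5 : ∑ i ∈ C, |x i| = 0 := Finset.sum_eq_zero fun i hi => by rw [hxC i hi]; simp
    have e6 : ∑ i ∈ Δ, (|x i| - |xstar i|) ≤ ∑ i ∈ Δ, |hv i| := by
      apply Finset.sum_le_sum
      intro i _
      rw [hhv]
      simp only [Pi.sub_apply]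
      have := abs_sub_abs_le_abs_sub (x i) (xstar i)
      have h2 : |x i - xstar i| = |xstar i - x i| := abs_sub_comm _ _
      linarith
    rw [l1_restr, l1_restr]
    rw [Finset.sum_sub_distrib] at e6
    linarith
  -- the blocks
  set F : ℕ → Fin n → ℝ := fun j => restr (blk hv k C j) hv with hF
  set B0 : Finset (Fin n) := blk hv k C 0 with hB0
  set E : Finset (Fin n) := A ∪ B0 with hE
  have hblkC : ∀ j, blk hv k C j ⊆ C := fun j => (blk_subset j).trans (remB_subset j)
  have hAblk : ∀ j, Disjoint A (blk hv k C j) := fun j =>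
    (disjoint_compl_right (a := A)).mono_right (hC ▸ hblkC j)
  have hAcard : A.card ≤ s + k := by
    calc A.card ≤ T.card + Δ.card := Finset.card_union_le T Δ
      _ ≤ s + k := by rw [hs]; omega
  have hEcard : E.card ≤ s + 2 * k := by
    calc E.card ≤ A.card + B0.card := Finset.card_union_le A B0
      _ ≤ (s + k) + k := add_le_add hAcard (blk_card_le 0)
      _ ≤ s + 2 * k := by omega
  -- decomposition of hv
  have hdecomp0 : hv = restr A hv + restr C hv := by
    funext i
    by_cases hi : i ∈ A <;> simp [restr, hC, hi, Finset.mem_compl]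
  have hCbi : C = (Finset.range C.card).biUnion (blk hv k C) := by
    have h1 := remB_union (h := hv) (k := k) (C := C) C.card
    rw [remB_empty hk, Finset.empty_union] at h1
    exact h1
  have hrestrC : restr C hv = ∑ j ∈ Finset.range C.card, F j := by
    have h1 := restr_biUnion_eq_sum C.card (blk hv k C) (fun i j hij => blk_disj hij) hv
    rw [← hCbi] at h1
    exact h1
  have hFN : F C.card = 0 := by
    have he : blk hv k C C.card = ∅ := Finset.subset_empty.mp
      (by rw [← remB_empty (h := hv) (C := C) hk]; exact blk_subset C.card)
    rw [hF]
    simp only [he]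
    funext i
    simp [restr]
  have hsumC : restr C hv = F 0 + ∑ j ∈ Finset.range C.card, F (j + 1) := by
    rw [hrestrC]
    have h2 : ∑ j ∈ Finset.range C.card, F j = ∑ j ∈ Finset.range (C.card + 1), F j := by
      rw [Finset.sum_range_succ, hFN, add_zero]
    rw [h2, Finset.sum_range_succ']
    ring
  have hErestr : restr E hv = restr A hv + restr B0 hv := by
    rw [hE]
    exact restr_union (hAblk 0) hv
  have hF0 : F 0 = restr B0 hv := rfl
  have hdecomp : hv = restr E hv + ∑ j ∈ Finset.range C.card, F (j + 1) := by
    calc hv = restr A hv + restr C hv := hdecomp0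
      _ = restr A hv + (restr B0 hv + ∑ j ∈ Finset.range C.card, F (j + 1)) := by
          rw [hsumC, hF0]
      _ = restr E hv + ∑ j ∈ Finset.range C.card, F (j + 1) := by rw [hErestr, add_assoc]
  -- main quantities
  set G := l2 (restr E hv) with hG
  set P := l2 (restr A hv) with hP
  set Q := l2 (restr B0 hv) with hQ
  have hGnn : 0 ≤ G := l2_nonneg _
  have hPnn : 0 ≤ P := l2_nonneg _
  have hQnn : 0 ≤ Q := l2_nonneg _
  have hPQ : P ^ 2 + Q ^ 2 = G ^ 2 := by
    rw [hG, hErestr, sq_l2_add_of_disjoint (restr_pt_disj (hAblk 0) hv hv)]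
  -- the zero inner product expansion
  have hzero : ip (Φ.mulVec hv) (Φ.mulVec (restr E hv)) = 0 := by
    rw [hΦh]
    unfold ip
    simp
  have hexpand : l2 (Φ.mulVec (restr E hv)) ^ 2
      + ∑ j ∈ Finset.range C.card, ip (Φ.mulVec (F (j + 1))) (Φ.mulVec (restr E hv)) = 0 := by
    rw [← hzero]
    nth_rewrite 3 [hdecomp]
    rw [Matrix.mulVec_add, ip_add_left, ip_self]
    congr 1
    rw [mulVec_sum', ip_sum_left]
  -- per-term bound
  have hsuppE : (Function.support (restr E hv)).ncard ≤ s + 2 * k :=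
    le_trans (ncard_support_restr E hv) hEcard
  have hterm : ∀ j ∈ Finset.range C.card,
      |ip (Φ.mulVec (F (j + 1))) (Φ.mulVec (restr E hv))|
        ≤ (δsk * P + δk * Q) * l2 (F (j + 1)) := by
    intro j _
    have hsplit : ip (Φ.mulVec (F (j + 1))) (Φ.mulVec (restr E hv))
        = ip (Φ.mulVec (F (j + 1))) (Φ.mulVec (restr A hv))
          + ip (Φ.mulVec (F (j + 1))) (Φ.mulVec (restr B0 hv)) := by
      rw [hErestr, Matrix.mulVec_add, ip_comm, ip_add_left, ip_comm, add_comm, ip_comm, add_comm]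
    have hd1 : ∀ i, F (j + 1) i = 0 ∨ restr A hv i = 0 :=
      restr_pt_disj (hAblk (j + 1)).symm hv hv
    have hc1 : (Function.support (F (j + 1)) ∪ Function.support (restr A hv)).ncard
        ≤ s + 2 * k := by
      refine le_trans (ncard_union_supports _ _ hv hv) ?_
      calc (blk hv k C (j + 1) ∪ A).card ≤ (blk hv k C (j + 1)).card + A.card :=
            Finset.card_union_le _ _
        _ ≤ k + (s + k) := add_le_add (blk_card_le _) hAcard
        _ ≤ s + 2 * k := by omega
    have h1 : |ip (Φ.mulVec (F (j + 1))) (Φ.mulVec (restr A hv))| ≤ δsk * l2 (F (j + 1)) * P :=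
      rip_ip_le (le_of_lt hδsk0) hRIPsk _ _ hd1 hc1
    have hd2 : ∀ i, F (j + 1) i = 0 ∨ restr B0 hv i = 0 :=
      restr_pt_disj (blk_disj (Nat.succ_pos j)).symm hv hv
    have hc2 : (Function.support (F (j + 1)) ∪ Function.support (restr B0 hv)).ncard
        ≤ 2 * k := by
      refine le_trans (ncard_union_supports _ _ hv hv) ?_
      calc (blk hv k C (j + 1) ∪ B0).card ≤ (blk hv k C (j + 1)).card + B0.card :=
            Finset.card_union_le _ _
        _ ≤ k + k := add_le_add (blk_card_le _) (blk_card_le _)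
        _ ≤ 2 * k := by omega
    have h2 : |ip (Φ.mulVec (F (j + 1))) (Φ.mulVec (restr B0 hv))| ≤ δk * l2 (F (j + 1)) * Q :=
      rip_ip_le (le_of_lt hδk0) hRIPk _ _ hd2 hc2
    calc |ip (Φ.mulVec (F (j + 1))) (Φ.mulVec (restr E hv))|
        ≤ |ip (Φ.mulVec (F (j + 1))) (Φ.mulVec (restr A hv))|
          + |ip (Φ.mulVec (F (j + 1))) (Φ.mulVec (restr B0 hv))| := by
          rw [hsplit]; exact abs_add_le _ _
      _ ≤ δsk * l2 (F (j + 1)) * P + δk * l2 (F (j + 1)) * Q := add_le_add h1 h2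
      _ = (δsk * P + δk * Q) * l2 (F (j + 1)) := by ring
  -- bound on the tail sum
  have hsqk : (0:ℝ) < Real.sqrt k := Real.sqrt_pos.mpr (by exact_mod_cast hk)
  have htail : ∑ j ∈ Finset.range C.card, l2 (F (j + 1)) ≤ G := by
    have hstep : ∑ j ∈ Finset.range C.card, l2 (F (j + 1))
        ≤ (∑ j ∈ Finset.range C.card, l1 (restr (blk hv k C j) hv)) / Real.sqrt k := by
      rw [Finset.sum_div]
      exact Finset.sum_le_sum fun j _ => blk_l2_le hk j
    have hl1C : ∑ j ∈ Finset.range C.card, l1 (restr (blk hv k C j) hv) = l1 (restr C hv) := by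
      have h1 := l1_restr_biUnion C.card (blk hv k C) (fun i j hij => blk_disj hij) hv
      rw [← hCbi] at h1
      exact h1.symm
    have hΔE : Δ ⊆ E := le_trans (Finset.subset_union_right) (Finset.subset_union_left)
    have hΔcard : Real.sqrt Δ.card ≤ Real.sqrt k := Real.sqrt_le_sqrt (by exact_mod_cast hΔk)
    calc ∑ j ∈ Finset.range C.card, l2 (F (j + 1))
        ≤ (∑ j ∈ Finset.range C.card, l1 (restr (blk hv k C j) hv)) / Real.sqrt k := hstep
      _ = l1 (restr C hv) / Real.sqrt k := by rw [hl1C]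
      _ ≤ l1 (restr Δ hv) / Real.sqrt k := by gcongr
      _ ≤ (Real.sqrt Δ.card * l2 (restr Δ hv)) / Real.sqrt k := by
          gcongr
          exact l1_le_sqrt_card_mul_l2 Δ hv
      _ ≤ (Real.sqrt k * l2 (restr Δ hv)) / Real.sqrt k := by
          gcongr
          exact l2_nonneg _
      _ = l2 (restr Δ hv) := by field_simp
      _ ≤ G := l2_restr_mono hΔE hv
  -- combine
  have hripE := (hRIPsk (restr E hv) hsuppE).1
  have hchain : (1 - δsk) * G ^ 2 ≤ (δsk * P + δk * Q) * G := by
    have h1 : l2 (Φ.mulVec (restr E hv)) ^ 2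
        ≤ ∑ j ∈ Finset.range C.card, |ip (Φ.mulVec (F (j + 1))) (Φ.mulVec (restr E hv))| := by
      have h2 : l2 (Φ.mulVec (restr E hv)) ^ 2
          = - ∑ j ∈ Finset.range C.card, ip (Φ.mulVec (F (j + 1))) (Φ.mulVec (restr E hv)) := by
        linarith [hexpand]
      rw [h2]
      calc - ∑ j ∈ Finset.range C.card, ip (Φ.mulVec (F (j + 1))) (Φ.mulVec (restr E hv))
          ≤ |∑ j ∈ Finset.range C.card, ip (Φ.mulVec (F (j + 1))) (Φ.mulVec (restr E hv))| :=
            neg_le_abs _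
        _ ≤ ∑ j ∈ Finset.range C.card, |ip (Φ.mulVec (F (j + 1))) (Φ.mulVec (restr E hv))| :=
            Finset.abs_sum_le_sum_abs _ _
    have h3 : ∑ j ∈ Finset.range C.card, |ip (Φ.mulVec (F (j + 1))) (Φ.mulVec (restr E hv))|
        ≤ (δsk * P + δk * Q) * G := by
      calc ∑ j ∈ Finset.range C.card, |ip (Φ.mulVec (F (j + 1))) (Φ.mulVec (restr E hv))|
          ≤ ∑ j ∈ Finset.range C.card, (δsk * P + δk * Q) * l2 (F (j + 1)) :=
            Finset.sum_le_sum hterm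
        _ = (δsk * P + δk * Q) * ∑ j ∈ Finset.range C.card, l2 (F (j + 1)) := by
            rw [Finset.mul_sum]
        _ ≤ (δsk * P + δk * Q) * G := by
            apply mul_le_mul_of_nonneg_left htail
            positivity
    linarith [hripE]
  -- Cauchy-Schwarz in the plane and the RIP condition
  set c := Real.sqrt (δsk ^ 2 + δk ^ 2) with hc
  have hc2 : c ^ 2 = δsk ^ 2 + δk ^ 2 := Real.sq_sqrt (by positivity)
  have hcnn : 0 ≤ c := Real.sqrt_nonneg _
  have hCS : δsk * P + δk * Q ≤ c * G := by
    nlinarith [sq_nonneg (δsk * Q - δk * P), hPQ, sq_nonneg (δsk * P + δk * Q - c * G),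
      mul_nonneg hcnn hGnn, mul_nonneg (mul_nonneg (le_of_lt hδsk0) hPnn) (mul_nonneg (le_of_lt hδk0) hQnn)]
  have hclt : c < 1 - δsk := by
    have h1 : δsk ^ 2 + δk ^ 2 < (1 - δsk) ^ 2 := by nlinarith
    have h2 : (0:ℝ) < 1 - δsk := by linarith
    calc c = Real.sqrt (δsk ^ 2 + δk ^ 2) := hc
      _ < Real.sqrt ((1 - δsk) ^ 2) := Real.sqrt_lt_sqrt (by positivity) h1
      _ = 1 - δsk := Real.sqrt_sq (le_of_lt h2)
  have hG2 : G ^ 2 ≤ 0 := by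
    nlinarith [hchain, mul_le_mul_of_nonneg_right hCS hGnn, hclt, sq_nonneg G, hGnn]
  have hG0 : G = 0 := by
    have h20 : G ^ 2 = 0 := le_antisymm hG2 (sq_nonneg G)
    exact pow_eq_zero_iff two_ne_zero |>.mp h20
  -- conclude
  have hEzero : ∀ i ∈ E, hv i = 0 := restr_eq_zero_of_l2 (hG ▸ hG0)
  have hΔzero : l1 (restr Δ hv) = 0 := by
    rw [l1_restr]
    apply Finset.sum_eq_zero
    intro i hi
    have : i ∈ E := (le_trans (Finset.subset_union_right) (Finset.subset_union_left)) hi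
    rw [hEzero i this]
    simp
  have hCzero : ∀ i ∈ C, hv i = 0 := by
    have h1 : l1 (restr C hv) = 0 :=
      le_antisymm (hΔzero ▸ hcone) (by rw [l1_restr]; positivity)
    rw [l1_restr] at h1
    intro i hi
    have := (Finset.sum_eq_zero_iff_of_nonneg fun j _ => abs_nonneg (hv j)).mp h1 i hi
    exact abs_eq_zero.mp this
  funext i
  have hvi : hv i = 0 := by
    by_cases hi : i ∈ A
    · exact hEzero i (Finset.subset_union_left hi)
    · exact hCzero i (by rw [hC]; exact Finset.mem_compl.mpr hi)
  have : xstar i - x i = 0 := hvi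
  linarith
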